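/- If h is a trivial self-homeomorphism of ω* that is chain transitive, then h is isomorphic to the shift map σ or to its inverse σ⁻¹. -/

import Mathlib

open Set TopologicalSpace

noncomputable section

/-- `ω*`, the Stone–Čech remainder `βω ∖ ω`: the space of free (non-principal)
ultrafilters on `ℕ`, as a subspace of `βℕ = Ultrafilter ℕ` (whose topology is
generated by the clopen sets `A* = {u : A ∈ u}` for `A ⊆ ℕ`). -/
abbrev NStar : Type := {u : Ultrafilter ℕ // ∀ n : ℕ, u ≠ pure n}

lemma free_map_add (u : NStar) : ∀ n : ℕ, Ultrafilter.map (· + 1) u.1 ≠ pure n := by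
  intro n hn
  have h1 : (· + 1) ⁻¹' {n} ∈ u.1 := by
    have : {n} ∈ Ultrafilter.map (· + 1) u.1 := by
      rw [hn]; exact Ultrafilter.mem_pure.mpr rfl
    exact this
  have hfin : ((· + 1) ⁻¹' {n} : Set ℕ).Finite := by
    apply Set.Finite.subset (Set.finite_singleton (n - 1))
    intro x hx
    simp only [Set.mem_preimage, Set.mem_singleton_iff] at hx ⊢
    omega
  obtain ⟨x, -, hx⟩ := Ultrafilter.eq_pure_of_finite_mem hfin h1
  exact u.2 x hx

lemma free_map_sub (u : NStar) : ∀ n : ℕ, Ultrafilter.map (· - 1) u.1 ≠ pure n := by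
  intro n hn
  have h1 : (· - 1) ⁻¹' {n} ∈ u.1 := by
    have : {n} ∈ Ultrafilter.map (· - 1) u.1 := by
      rw [hn]; exact Ultrafilter.mem_pure.mpr rfl
    exact this
  have hfin : ((· - 1) ⁻¹' {n} : Set ℕ).Finite := by
    apply Set.Finite.subset (Set.toFinite {0, 1, n + 1})
    intro x hx
    simp only [Set.mem_preimage, Set.mem_singleton_iff] at hx
    simp only [Set.mem_insert_iff, Set.mem_singleton_iff]
    omega
  obtain ⟨x, -, hx⟩ := Ultrafilter.eq_pure_of_finite_mem hfin h1
  exact u.2 x hx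

lemma ucofinite (u : NStar) : (u.1 : Filter ℕ) ≤ Filter.cofinite := by
  rcases u.1.le_cofinite_or_eq_pure with h | ⟨a, ha⟩
  · exact h
  · exact absurd ha (u.2 a)

lemma left_inv_aux (u : NStar) :
    Ultrafilter.map (· - 1) (Ultrafilter.map (· + 1) u.1) = u.1 := by
  apply Ultrafilter.coe_injective
  rw [Ultrafilter.coe_map, Ultrafilter.coe_map, Filter.map_map]
  have : ((· - 1) ∘ (· + 1) : ℕ → ℕ) = id := by funext x; simp
  rw [this, Filter.map_id]

lemma right_inv_aux (u : NStar) :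
    Ultrafilter.map (· + 1) (Ultrafilter.map (· - 1) u.1) = u.1 := by
  apply Ultrafilter.coe_injective
  rw [Ultrafilter.coe_map, Ultrafilter.coe_map, Filter.map_map]
  have h1 : ((· + 1) ∘ (· - 1) : ℕ → ℕ) =ᶠ[(u.1 : Filter ℕ)] id := by
    apply ucofinite u
    have : {x : ℕ | ¬ ((· + 1) ∘ (· - 1) : ℕ → ℕ) x = id x} ⊆ {0} := by
      intro x hx
      simp only [Function.comp_apply, id_eq, Set.mem_setOf_eq] at hx
      simp only [Set.mem_singleton_iff]
      omega
    exact Set.Finite.subset (Set.finite_singleton 0) this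
  calc Filter.map ((· + 1) ∘ (· - 1)) (u.1 : Filter ℕ)
      = Filter.map id (u.1 : Filter ℕ) := Filter.map_congr h1
    _ = (u.1 : Filter ℕ) := Filter.map_id

lemma continuous_umap (m : ℕ → ℕ) :
    Continuous (Ultrafilter.map m : Ultrafilter ℕ → Ultrafilter ℕ) := by
  rw [ultrafilterBasis_is_basis.continuous_iff]
  rintro _ ⟨s, rfl⟩
  exact ultrafilter_isOpen_basic (m ⁻¹' s)

/-- The shift map on `ω*`: it sends `u` to the ultrafilter generated by
`{A + 1 : A ∈ u}`, i.e. the image ultrafilter of `u` under `n ↦ n + 1`. -/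
def shiftF (u : NStar) : NStar := ⟨Ultrafilter.map (· + 1) u.1, free_map_add u⟩

/-- The inverse of the shift map on `ω*`, induced by the predecessor function. -/
def shiftInvF (u : NStar) : NStar := ⟨Ultrafilter.map (· - 1) u.1, free_map_sub u⟩

/-- The shift map `σ : ω* → ω*` as a self-homeomorphism of `ω*`. -/
def sigmaShift : NStar ≃ₜ NStar :=
  { toFun := shiftF
    invFun := shiftInvF
    left_inv := fun u => Subtype.ext (left_inv_aux u)
    right_inv := fun u => Subtype.ext (right_inv_aux u)
    continuous_toFun :=
      Continuous.subtype_mk ((continuous_umap (· + 1)).comp continuous_subtype_val) _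
    continuous_invFun :=
      Continuous.subtype_mk ((continuous_umap (· - 1)).comp continuous_subtype_val) _ }

/-- `f` and `g` are isomorphic dynamical systems on `ω*`: there is `h ∈ H(ω*)`
with `h ∘ f = g ∘ h`. -/
def Isomorphic (f g : NStar ≃ₜ NStar) : Prop :=
  ∃ h : NStar ≃ₜ NStar, ∀ u, h (f u) = g (h u)

/-- `Iso(σ)`: the set of members of `H(ω*)` isomorphic to the shift map `σ`. -/
def IsoSigma : Set (NStar ≃ₜ NStar) := {h | Isomorphic h sigmaShift}

/-- `Iso(σ⁻¹)`: the set of members of `H(ω*)` isomorphic to `σ⁻¹`. -/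
def IsoSigmaInv : Set (NStar ≃ₜ NStar) := {h | Isomorphic h sigmaShift.symm}

/-- The compact-open topology on the group `H(X)` of self-homeomorphisms of `X`,
generated by the sets `V(K,U) = {h : h[K] ⊆ U}` for `K` compact and `U` open. -/
instance homeoCO {X : Type*} [TopologicalSpace X] : TopologicalSpace (X ≃ₜ X) :=
  TopologicalSpace.generateFrom
    {S : Set (X ≃ₜ X) | ∃ K U : Set X, IsCompact K ∧ IsOpen U ∧
      S = {h : X ≃ₜ X | ∀ x ∈ K, h x ∈ U}}

/-- `h` is chain transitive: for all points `a, b` and every open cover `𝒰` of the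
space, there is a `𝒰`-chain `x_0 = a, x_1, …, x_n = b` (with `n ≥ 1`), i.e. for
each `i < n` there is `U ∈ 𝒰` with `h(x_i) ∈ U` and `x_{i+1} ∈ U`. -/
def ChainTransitive {X : Type*} [TopologicalSpace X] (h : X → X) : Prop :=
  ∀ a b : X, ∀ 𝒰 : Set (Set X), (∀ U ∈ 𝒰, IsOpen U) → ⋃₀ 𝒰 = univ →
    ∃ n : ℕ, 1 ≤ n ∧ ∃ x : ℕ → X, x 0 = a ∧ x n = b ∧
      ∀ i < n, ∃ U ∈ 𝒰, h (x i) ∈ U ∧ x (i + 1) ∈ U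

/-- `f : ω → ω` is a mod-finite permutation of `ω`: it restricts to a bijection
between two cofinite subsets of `ω`. -/
def ModFinPerm (f : ℕ → ℕ) : Prop :=
  ∃ A B : Set ℕ, A.Finite ∧ B.Finite ∧ Set.BijOn f Aᶜ Bᶜ

/-- `h ∈ H(ω*)` is trivial: it is induced by a mod-finite permutation `f` of `ω`,
i.e. `h(u)` is the ultrafilter generated by `{f[A] : A ∈ u}` for every `u ∈ ω*`. -/
def IsTrivialHomeo (h : NStar ≃ₜ NStar) : Prop :=
  ∃ f : ℕ → ℕ, ModFinPerm f ∧
    ∀ (u : NStar) (A : Set ℕ), A ∈ u.1 → f '' A ∈ (h u).1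


section AuxProof
open Filter Function

lemma free_of_le_cofinite {u : Ultrafilter ℕ} (hu : (u : Filter ℕ) ≤ Filter.cofinite) :
    ∀ n : ℕ, u ≠ pure n := by
  intro n hn
  have h1 : ({n}ᶜ : Set ℕ) ∈ u := hu (Set.finite_singleton n).compl_mem_cofinite
  rw [hn] at h1
  simp at h1

lemma exists_free_mem {S : Set ℕ} (hS : S.Infinite) : ∃ u : NStar, S ∈ u.1 := by
  have hne : Filter.NeBot (Filter.cofinite ⊓ Filter.principal S) := by
    constructor
    intro hbot
    rw [Filter.inf_principal_eq_bot, Filter.mem_cofinite, compl_compl] at hbot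
    exact hS hbot
  obtain ⟨u, hu⟩ := Ultrafilter.exists_le (Filter.cofinite ⊓ Filter.principal S)
  exact ⟨⟨u, free_of_le_cofinite (hu.trans inf_le_left)⟩,
    hu (Filter.mem_inf_of_right (Filter.mem_principal_self S))⟩

/-- The key expansion property forced by chain transitivity. -/
def Expanding (F : ℕ → ℕ) : Prop :=
  ∀ S : Set ℕ, S.Infinite → Sᶜ.Infinite → (F '' S \ S).Infinite

lemma expanding_of_chainTransitive (h : NStar ≃ₜ NStar) (f : ℕ → ℕ)
    (hmap : ∀ (u : NStar) (A : Set ℕ), A ∈ u.1 → f '' A ∈ (h u).1)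
    (hct : ChainTransitive ⇑h) : Expanding f := by
  intro S hS hSc
  by_contra hfin
  rw [Set.not_infinite] at hfin
  set U : Set NStar := {u | S ∈ u.1} with hU
  have hUopen : IsOpen U := by
    have h0 : U = Subtype.val ⁻¹' {u : Ultrafilter ℕ | S ∈ u} := rfl
    rw [h0]; exact (ultrafilter_isOpen_basic S).preimage continuous_subtype_val
  have hUcopen : IsOpen Uᶜ := by
    have h0 : Uᶜ = Subtype.val ⁻¹' {u : Ultrafilter ℕ | Sᶜ ∈ u} := by
      ext u
      simp only [Set.mem_compl_iff, Set.mem_preimage, Set.mem_setOf_eq, hU]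
      exact (Ultrafilter.compl_mem_iff_notMem).symm
    rw [h0]; exact (ultrafilter_isOpen_basic Sᶜ).preimage continuous_subtype_val
  have hinv : ∀ u ∈ U, h u ∈ U := by
    intro u hu
    have h1 : f '' S ∈ (h u).1 := hmap u S hu
    have h2 : ((f '' S \ S)ᶜ : Set ℕ) ∈ (h u).1 := ucofinite (h u) hfin.compl_mem_cofinite
    have h3 : f '' S ∩ (f '' S \ S)ᶜ ⊆ S := by
      intro y hy
      by_contra hyS
      exact hy.2 ⟨hy.1, hyS⟩
    exact (h u).1.mem_of_superset (Filter.inter_mem h1 h2) h3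
  obtain ⟨a, ha⟩ := exists_free_mem hS
  obtain ⟨b, hb⟩ := exists_free_mem hSc
  obtain ⟨n, hn1, x, hx0, hxn, hstep⟩ := hct a b {U, Uᶜ}
    (by rintro V (rfl | rfl); exacts [hUopen, hUcopen])
    (by simp)
  have hall : ∀ i, i ≤ n → x i ∈ U := by
    intro i
    induction i with
    | zero => intro _; rw [hx0]; exact ha
    | succ i IH =>
      intro hi
      have hxi : x i ∈ U := IH (Nat.le_of_succ_le hi)
      obtain ⟨V, hV, h1, h2⟩ := hstep i hi
      rcases hV with rfl | hV
      · exact h2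
      · rw [Set.mem_singleton_iff] at hV
        subst hV
        exact absurd (hinv _ hxi) h1
  have hbb : b ∈ U := hxn ▸ hall n le_rfl
  exact (Ultrafilter.compl_mem_iff_notMem.mp hb) hbb

lemma h_eq_map (h : NStar ≃ₜ NStar) (f : ℕ → ℕ)
    (hmap : ∀ (u : NStar) (A : Set ℕ), A ∈ u.1 → f '' A ∈ (h u).1)
    (u : NStar) : ((h u).1 : Filter ℕ) = Filter.map f u.1 := by
  have hle : ((h u).1 : Filter ℕ) ≤ Filter.map f u.1 := by
    intro s hs
    exact (h u).1.mem_of_superset (hmap u (f ⁻¹' s) hs) (Set.image_preimage_subset f s)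
  have := Ultrafilter.unique (Ultrafilter.map f u.1) (g := ((h u).1 : Filter ℕ))
    (by rwa [Ultrafilter.coe_map])
  rw [this, Ultrafilter.coe_map]

lemma modFinPerm_fiber_finite {g : ℕ → ℕ} (hg : ModFinPerm g) (n : ℕ) :
    (g ⁻¹' {n}).Finite := by
  obtain ⟨A, B, hA, hB, hbij⟩ := hg
  have hsub : g ⁻¹' {n} ⊆ A ∪ (g ⁻¹' {n} ∩ Aᶜ) := by
    intro x hx
    by_cases hxA : x ∈ A
    · exact Or.inl hxA
    · exact Or.inr ⟨hx, hxA⟩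
  refine Set.Finite.subset (hA.union ?_) hsub
  apply Set.Subsingleton.finite
  intro a ha b hb
  exact hbij.injOn ha.2 hb.2 (ha.1.trans hb.1.symm)

lemma map_le_cofinite {g : ℕ → ℕ} (hfib : ∀ n, (g ⁻¹' {n}).Finite) {u : Ultrafilter ℕ}
    (hu : (u : Filter ℕ) ≤ Filter.cofinite) :
    ((Ultrafilter.map g u : Ultrafilter ℕ) : Filter ℕ) ≤ Filter.cofinite := by
  intro s hs
  rw [Ultrafilter.coe_map, Filter.mem_map]
  apply hu
  rw [Filter.mem_cofinite] at hs ⊢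
  have h0 : (g ⁻¹' s)ᶜ = ⋃ n ∈ sᶜ, g ⁻¹' {n} := by
    ext x; simp
  rw [h0]
  exact Set.Finite.biUnion hs fun n _ => hfib n

lemma modFinPerm_inverse {g : ℕ → ℕ} (hg : ModFinPerm g) :
    ∃ g' : ℕ → ℕ, ModFinPerm g' ∧ (g' ∘ g) =ᶠ[Filter.cofinite] id ∧
      (g ∘ g') =ᶠ[Filter.cofinite] id := by
  obtain ⟨A, B, hA, hB, hbij⟩ := hg
  set g' := Function.invFunOn g Aᶜ with hg'
  have hinv : Set.InvOn g' g Aᶜ Bᶜ := hbij.invOn_invFunOn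
  refine ⟨g', ⟨B, A, hB, hA, hinv.symm.bijOn hbij.surjOn.mapsTo_invFunOn hbij.mapsTo⟩, ?_, ?_⟩
  · have : {x | (g' ∘ g) x = id x}ᶜ ⊆ A := by
      intro x hx
      by_contra hxA
      exact hx (hinv.1 hxA)
    exact Filter.mem_cofinite.mpr (hA.subset this)
  · have : {x | (g ∘ g') x = id x}ᶜ ⊆ B := by
      intro x hx
      by_contra hxB
      exact hx (hinv.2 hxB)
    exact Filter.mem_cofinite.mpr (hB.subset this)

lemma exists_homeo_of_modFinPerm {g : ℕ → ℕ} (hg : ModFinPerm g) :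
    ∃ H : NStar ≃ₜ NStar, ∀ u : NStar, ((H u).1 : Filter ℕ) = Filter.map g (u.1 : Filter ℕ) := by
  obtain ⟨g', hg', h1, h2⟩ := modFinPerm_inverse hg
  have fib := modFinPerm_fiber_finite hg
  have fib' := modFinPerm_fiber_finite hg'
  refine ⟨{ toFun := fun u => ⟨Ultrafilter.map g u.1,
              free_of_le_cofinite (map_le_cofinite fib (ucofinite u))⟩
            invFun := fun u => ⟨Ultrafilter.map g' u.1,
              free_of_le_cofinite (map_le_cofinite fib' (ucofinite u))⟩
            left_inv := ?_
            right_inv := ?_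
            continuous_toFun :=
              Continuous.subtype_mk ((continuous_umap g).comp continuous_subtype_val) _
            continuous_invFun :=
              Continuous.subtype_mk ((continuous_umap g').comp continuous_subtype_val) _ },
          fun u => Ultrafilter.coe_map g u.1⟩
  · intro u
    apply Subtype.ext
    apply Ultrafilter.coe_injective
    rw [Ultrafilter.coe_map, Ultrafilter.coe_map, Filter.map_map]
    calc Filter.map (g' ∘ g) (u.1 : Filter ℕ)
        = Filter.map id (u.1 : Filter ℕ) := Filter.map_congr (h1.filter_mono (ucofinite u))
      _ = (u.1 : Filter ℕ) := Filter.map_id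
  · intro u
    apply Subtype.ext
    apply Ultrafilter.coe_injective
    rw [Ultrafilter.coe_map, Ultrafilter.coe_map, Filter.map_map]
    calc Filter.map (g ∘ g') (u.1 : Filter ℕ)
        = Filter.map id (u.1 : Filter ℕ) := Filter.map_congr (h2.filter_mono (ucofinite u))
      _ = (u.1 : Filter ℕ) := Filter.map_id

lemma isomorphic_of_conj (h : NStar ≃ₜ NStar) (f : ℕ → ℕ)
    (h_eq : ∀ u : NStar, ((h u).1 : Filter ℕ) = Filter.map f (u.1 : Filter ℕ))
    {g : ℕ → ℕ} (hg : ModFinPerm g) {m : ℕ → ℕ}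
    (hconj : (g ∘ f) =ᶠ[Filter.cofinite] (m ∘ g)) (σ : NStar ≃ₜ NStar)
    (hσ : ∀ u : NStar, ((σ u).1 : Filter ℕ) = Filter.map m (u.1 : Filter ℕ)) :
    Isomorphic h σ := by
  obtain ⟨H, hH⟩ := exists_homeo_of_modFinPerm hg
  refine ⟨H, fun u => Subtype.ext (Ultrafilter.coe_injective ?_)⟩
  rw [hH, h_eq, hσ, hH, Filter.map_map, Filter.map_map]
  exact Filter.map_congr (hconj.filter_mono (ucofinite u))

lemma sigma_coe (u : NStar) :
    ((sigmaShift u).1 : Filter ℕ) = Filter.map (· + 1) (u.1 : Filter ℕ) :=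
  Ultrafilter.coe_map _ _

lemma sigma_symm_coe (u : NStar) :
    ((sigmaShift.symm u).1 : Filter ℕ) = Filter.map (· - 1) (u.1 : Filter ℕ) :=
  Ultrafilter.coe_map _ _

/-- The forward orbit of `x` under `F`. -/
def Orb (F : ℕ → ℕ) (x : ℕ) : Set ℕ := Set.range (fun n => F^[n] x)

lemma self_mem_orb (F : ℕ → ℕ) (x : ℕ) : x ∈ Orb F x := ⟨0, rfl⟩

lemma iterate_mem_orb (F : ℕ → ℕ) (x : ℕ) (n : ℕ) : F^[n] x ∈ Orb F x := ⟨n, rfl⟩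

lemma orb_image_subset (F : ℕ → ℕ) (x : ℕ) : F '' Orb F x ⊆ Orb F x := by
  rintro _ ⟨_, ⟨n, rfl⟩, rfl⟩
  exact ⟨n + 1, by simp [Function.iterate_succ_apply']⟩

lemma orb_cofinite {F : ℕ → ℕ} (hF : Expanding F) {x : ℕ} (hx : (Orb F x).Infinite) :
    (Orb F x)ᶜ.Finite := by
  by_contra hc
  have hc' : (Orb F x)ᶜ.Infinite := hc
  obtain ⟨y, hy⟩ := (hF (Orb F x) hx hc').nonempty
  exact hy.2 (orb_image_subset F x hy.1)

lemma orb_finite_of_eq {F : ℕ → ℕ} {x : ℕ} {i j : ℕ} (hij : i < j)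
    (he : F^[i] x = F^[j] x) : (Orb F x).Finite := by
  have key : ∀ n, ∃ m, m < j ∧ F^[n] x = F^[m] x := by
    intro n
    induction n using Nat.strong_induction_on with
    | _ n IH =>
      by_cases hn : n < j
      · exact ⟨n, hn, rfl⟩
      · push_neg at hn
        have h1 : F^[n] x = F^[n - j + i] x := by
          have h2 : n = (n - j) + j := by omega
          have h3 : F^[n - j + j] x = F^[n - j + i] x := by
            rw [Function.iterate_add_apply, Function.iterate_add_apply, ← he]
          calc F^[n] x = F^[n - j + j] x := by rw [← h2]
            _ = F^[n - j + i] x := h3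
        obtain ⟨m, hm, hm2⟩ := IH (n - j + i) (by omega)
        exact ⟨m, hm, h1.trans hm2⟩
  have hsub : Orb F x ⊆ (fun m => F^[m] x) '' (Set.Iio j) := by
    rintro _ ⟨n, rfl⟩
    obtain ⟨m, hm, hm2⟩ := key n
    exact ⟨m, hm, hm2.symm⟩
  exact Set.Finite.subset ((Set.finite_Iio j).image _) hsub

lemma orb_inj {F : ℕ → ℕ} {x : ℕ} (hx : (Orb F x).Infinite) :
    Function.Injective (fun n => F^[n] x) := by
  intro i j hij
  by_contra hne
  rcases Nat.lt_or_ge i j with hlt | hge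
  · exact hx (orb_finite_of_eq hlt hij)
  · exact hx (orb_finite_of_eq (by omega) hij.symm)

/-- Periodic points of `F`. -/
def Per (F : ℕ → ℕ) : Set ℕ := {x | ∃ p, 1 ≤ p ∧ F^[p] x = x}

lemma per_apply {F : ℕ → ℕ} {x : ℕ} (hx : x ∈ Per F) : F x ∈ Per F := by
  obtain ⟨p, hp1, hp⟩ := hx
  refine ⟨p, hp1, ?_⟩
  rw [← Function.iterate_succ_apply, Function.iterate_succ_apply', hp]

lemma per_iterate_fix {F : ℕ → ℕ} {x : ℕ} {p : ℕ} (hp : F^[p] x = x) (m : ℕ) :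
    F^[p * m] x = x := by
  induction m with
  | zero => simp
  | succ m IH =>
    have : p * (m + 1) = p * m + p := by ring
    rw [this, Function.iterate_add_apply, hp, IH]

lemma mem_orb_of_per {F : ℕ → ℕ} {x y : ℕ} (hx : x ∈ Per F) (hy : y ∈ Orb F x) :
    x ∈ Orb F y := by
  obtain ⟨p, hp1, hp⟩ := hx
  obtain ⟨k, rfl⟩ := hy
  refine ⟨p * (k + 1) - k, ?_⟩
  show F^[p * (k + 1) - k] (F^[k] x) = x
  rw [← Function.iterate_add_apply]
  have h2 : p * (k + 1) - k + k = p * (k + 1) := by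
    have h3 : k + 1 ≤ p * (k + 1) := Nat.le_mul_of_pos_left (k + 1) hp1
    omega
  rw [h2]
  exact per_iterate_fix hp (k + 1)

lemma orb_subset_of_mem {F : ℕ → ℕ} {x y : ℕ} (hy : y ∈ Orb F x) : Orb F y ⊆ Orb F x := by
  obtain ⟨k, rfl⟩ := hy
  rintro _ ⟨n, rfl⟩
  exact ⟨n + k, (Function.iterate_add_apply F n k x)⟩

lemma orb_eq_of_per {F : ℕ → ℕ} {x y : ℕ} (hx : x ∈ Per F) (hy : y ∈ Orb F x) :
    Orb F y = Orb F x :=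
  Set.Subset.antisymm (orb_subset_of_mem hy) (orb_subset_of_mem (mem_orb_of_per hx hy))

lemma per_of_mem_orb {F : ℕ → ℕ} {x y : ℕ} (hx : x ∈ Per F) (hy : y ∈ Orb F x) :
    y ∈ Per F := by
  obtain ⟨p, hp1, hp⟩ := hx
  obtain ⟨k, rfl⟩ := hy
  refine ⟨p, hp1, ?_⟩
  rw [← Function.iterate_add_apply, Nat.add_comm, Function.iterate_add_apply, hp]

lemma orb_finite_of_per {F : ℕ → ℕ} {x : ℕ} (hx : x ∈ Per F) : (Orb F x).Finite := by
  obtain ⟨p, hp1, hp⟩ := hx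
  exact orb_finite_of_eq (i := 0) (j := p) (by omega) (by simpa using hp.symm)

lemma per_finite {F : ℕ → ℕ} (hF : Expanding F) : (Per F).Finite := by
  by_contra hinf'
  have hinf : (Per F).Infinite := hinf' 
  have him : F '' Per F ⊆ Per F := by
    rintro _ ⟨y, hy, rfl⟩
    exact per_apply hy
  by_cases hc : (Per F)ᶜ.Infinite
  · obtain ⟨y, hy⟩ := (hF (Per F) hinf hc).nonempty
    exact hy.2 (him hy.1)
  · -- Per F is cofinite; split the cycles
    set r : ℕ → ℕ := fun x => sInf (Orb F x) with hr
    have hrmem : ∀ x, r x ∈ Orb F x := fun x => Nat.sInf_mem ⟨x, self_mem_orb F x⟩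
    have hrorb : ∀ x ∈ Per F, Orb F (r x) = Orb F x := fun x hx => orb_eq_of_per hx (hrmem x)
    have hrper : ∀ x ∈ Per F, r x ∈ Per F := fun x hx => per_of_mem_orb hx (hrmem x)
    have hrr : ∀ x ∈ Per F, r (r x) = r x := by
      intro x hx
      show sInf (Orb F (r x)) = sInf (Orb F x)
      rw [hrorb x hx]
    have hmemr : ∀ x ∈ Per F, x ∈ Orb F (r x) := by
      intro x hx
      rw [hrorb x hx]
      exact self_mem_orb F x
    set R : Set ℕ := r '' Per F with hR
    have hRper : R ⊆ Per F := by
      rintro _ ⟨x, hx, rfl⟩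
      exact hrper x hx
    have hRinf : R.Infinite := by
      intro hRfin
      apply hinf
      have hsub : Per F ⊆ ⋃ c ∈ R, Orb F c := by
        intro x hx
        exact Set.mem_biUnion ⟨x, hx, rfl⟩ (hmemr x hx)
      exact Set.Finite.subset (hRfin.biUnion fun c hc => orb_finite_of_per (hRper hc)) hsub
    set e := hRinf.natEmbedding with he
    set R1 : Set ℕ := Set.range (fun k => (e (2 * k) : ℕ)) with hR1
    set Q : Set ℕ := {x | x ∈ Per F ∧ r x ∈ R1} with hQ
    have heinj : Function.Injective (fun k => (e (2 * k) : ℕ)) := by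
      intro a b hab
      have := e.injective (Subtype.val_injective hab)
      omega
    have hrfix : ∀ c ∈ R, r c = c := by
      rintro _ ⟨x, hx, rfl⟩
      exact hrr x hx
    have hQinf : Q.Infinite := by
      apply Set.Infinite.mono (s := Set.range (fun k => (e (2 * k) : ℕ)))
      · rintro _ ⟨k, rfl⟩
        have hcR : (e (2 * k) : ℕ) ∈ R := (e (2 * k)).2
        exact ⟨hRper hcR, by rw [hrfix _ hcR]; exact ⟨k, rfl⟩⟩
      · exact Set.infinite_range_of_injective heinj
    have hQcinf : Qᶜ.Infinite := by
      apply Set.Infinite.mono (s := Set.range (fun k => (e (2 * k + 1) : ℕ)))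
      · rintro _ ⟨k, rfl⟩
        have hcR : (e (2 * k + 1) : ℕ) ∈ R := (e (2 * k + 1)).2
        intro hmem
        obtain ⟨j, hj⟩ := (hrfix _ hcR) ▸ hmem.2
        have := e.injective (Subtype.val_injective hj)
        omega
      · apply Set.infinite_range_of_injective
        intro a b hab
        have := e.injective (Subtype.val_injective hab)
        omega
    obtain ⟨y, hy⟩ := (hF Q hQinf hQcinf).nonempty
    apply hy.2
    obtain ⟨z, hz, rfl⟩ := hy.1
    refine ⟨per_apply hz.1, ?_⟩
    have hFz : F z ∈ Orb F z := ⟨1, rfl⟩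
    have : r (F z) = r z := by
      show sInf (Orb F (F z)) = sInf (Orb F z)
      rw [orb_eq_of_per hz.1 hFz]
    rw [this]
    exact hz.2

lemma invFunOn_facts {f : ℕ → ℕ} {A B : Set ℕ} (hbij : Set.BijOn f Aᶜ Bᶜ) :
    (∀ y ∈ Bᶜ, Function.invFunOn f Aᶜ y ∈ Aᶜ ∧ f (Function.invFunOn f Aᶜ y) = y) ∧
      (∀ x ∈ Aᶜ, Function.invFunOn f Aᶜ (f x) = x) := by
  constructor
  · intro y hy
    have hex : ∃ a ∈ Aᶜ, f a = y := by
      obtain ⟨a, ha, rfl⟩ := hbij.surjOn hy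
      exact ⟨a, ha, rfl⟩
    exact ⟨Function.invFunOn_mem hex, Function.invFunOn_eq hex⟩
  · intro x hx
    exact hbij.injOn.leftInvOn_invFunOn hx

lemma iter_back {f : ℕ → ℕ} {A B : Set ℕ} (hbij : Set.BijOn f Aᶜ Bᶜ) :
    ∀ (k : ℕ) (x : ℕ), (∀ i < k, (Function.invFunOn f Aᶜ)^[i] x ∈ Bᶜ) →
      f^[k] ((Function.invFunOn f Aᶜ)^[k] x) = x := by
  set G := Function.invFunOn f Aᶜ with hG
  intro k
  induction k with
  | zero => intro x _; rfl
  | succ k IH =>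
    intro x hk
    have h1 : G^[k + 1] x = G (G^[k] x) := Function.iterate_succ_apply' G k x
    have h2 : f^[k + 1] (G^[k + 1] x) = f^[k] (f (G (G^[k] x))) := by
      rw [h1, Function.iterate_succ_apply]
    rw [h2, ((invFunOn_facts hbij).1 _ (hk k (Nat.lt_succ_self k))).2]
    exact IH x (fun i hi => hk i (Nat.lt_succ_of_lt hi))

lemma per_or_chain {f : ℕ → ℕ} {A B : Set ℕ} (hbij : Set.BijOn f Aᶜ Bᶜ)
    (hOG : ∀ x, (Orb (Function.invFunOn f Aᶜ) x).Finite) (x : ℕ) :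
    x ∈ Per f ∨ ∃ s ∈ B, x ∈ Orb f s := by
  set G := Function.invFunOn f Aᶜ with hG
  by_cases hcase : ∃ k, (∀ i < k, G^[i] x ∈ Bᶜ) ∧ G^[k] x ∈ B
  · obtain ⟨k, hk1, hk2⟩ := hcase
    exact Or.inr ⟨G^[k] x, hk2, ⟨k, iter_back hbij k x hk1⟩⟩
  · push_neg at hcase
    have hall : ∀ k, G^[k] x ∈ Bᶜ := by
      intro k
      induction k using Nat.strong_induction_on with
      | _ k IH => exact hcase k IH
    have hni : ¬ Function.Injective (fun n => G^[n] x) := by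
      intro hinj
      exact (Set.infinite_range_of_injective hinj) (hOG x)
    rw [Function.not_injective_iff] at hni
    obtain ⟨i, j, hij, hne⟩ := hni
    have key : ∀ i j : ℕ, i < j → G^[i] x = G^[j] x → x ∈ Per f := by
      intro i j hlt heq
      set p := j - i with hp
      have hp1 : 1 ≤ p := by omega
      have hx1 : ∀ i' < i, G^[i'] (G^[p] x) ∈ Bᶜ := by
        intro i' _
        rw [← Function.iterate_add_apply]
        exact hall _
      have hx2 : G^[i] (G^[p] x) = G^[i] x := by
        rw [← Function.iterate_add_apply]
        have : i + p = j := by omega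
        rw [this, ← heq]
      have hfix : x = G^[p] x := by
        have h1 : f^[i] (G^[i] (G^[p] x)) = G^[p] x := iter_back hbij i (G^[p] x) hx1
        have h2 : f^[i] (G^[i] x) = x := iter_back hbij i x (fun i' _ => hall i')
        rw [hx2, h2] at h1
        exact h1
      have h3 : f^[p] (G^[p] x) = x := iter_back hbij p x (fun i' _ => hall i')
      rw [← hfix] at h3
      exact ⟨p, hp1, h3⟩
    rcases Nat.lt_or_ge i j with h | h
    · exact Or.inl (key i j h hij)
    · exact Or.inl (key j i (by omega) hij.symm)

lemma not_all_finite {f : ℕ → ℕ} {A B : Set ℕ} (hA : A.Finite) (hB : B.Finite)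
    (hbij : Set.BijOn f Aᶜ Bᶜ) (hf : Expanding f)
    (hOf : ∀ x, (Orb f x).Finite)
    (hOG : ∀ x, (Orb (Function.invFunOn f Aᶜ) x).Finite) : False := by
  have hsub : (Set.univ : Set ℕ) ⊆ Per f ∪ ⋃ s ∈ B, Orb f s := by
    intro x _
    rcases per_or_chain hbij hOG x with hx | ⟨s, hs, hx⟩
    · exact Or.inl hx
    · exact Or.inr (Set.mem_biUnion hs hx)
  have hfin : (Set.univ : Set ℕ).Finite :=
    Set.Finite.subset ((per_finite hf).union (hB.biUnion fun s _ => hOf s)) hsub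
  exact Set.infinite_univ hfin

lemma expanding_inv {f : ℕ → ℕ} {A B : Set ℕ} (hA : A.Finite)
    (hbij : Set.BijOn f Aᶜ Bᶜ) (hf : Expanding f) :
    Expanding (Function.invFunOn f Aᶜ) := by
  set G := Function.invFunOn f Aᶜ with hG
  intro S hS hSc
  by_contra hfin'
  rw [Set.not_infinite] at hfin'
  have h2 := hf Sᶜ hSc (by rwa [compl_compl])
  have hsub : f '' Sᶜ \ Sᶜ ⊆ f '' (A ∪ (G '' S \ S)) := by
    rintro y ⟨⟨x, hxS, rfl⟩, hyS⟩
    rw [Set.notMem_compl_iff] at hyS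
    by_cases hxA : x ∈ A
    · exact ⟨x, Or.inl hxA, rfl⟩
    · have hGx : G (f x) = x := (invFunOn_facts hbij).2 x hxA
      exact ⟨x, Or.inr ⟨⟨f x, hyS, hGx⟩, hxS⟩, rfl⟩
  exact h2 (Set.Finite.subset ((hA.union hfin').image f) hsub)

lemma enum_spec {F : ℕ → ℕ} {x0 : ℕ} (hinf : (Orb F x0).Infinite) (n : ℕ) :
    sInf {m | F^[m] x0 = F^[n] x0} = n := by
  have h0 : {m | F^[m] x0 = F^[n] x0} = {n} := by
    ext m
    simp only [Set.mem_setOf_eq, Set.mem_singleton_iff]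
    constructor
    · intro hm; exact orb_inj hinf hm
    · rintro rfl; rfl
  rw [h0, csInf_singleton]

lemma enum_modFinPerm {F : ℕ → ℕ} {x0 : ℕ} (hinf : (Orb F x0).Infinite)
    (hcof : (Orb F x0)ᶜ.Finite) :
    ModFinPerm (fun y => sInf {n | F^[n] x0 = y}) := by
  set g : ℕ → ℕ := fun y => sInf {n | F^[n] x0 = y} with hg
  have g_enum : ∀ n, g (F^[n] x0) = n := fun n => enum_spec hinf n
  refine ⟨(Orb F x0)ᶜ, ∅, hcof, Set.finite_empty, ?_⟩
  rw [compl_compl, Set.compl_empty]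
  refine ⟨fun y _ => Set.mem_univ _, ?_, ?_⟩
  · intro a ha b hb hab
    obtain ⟨n, hn⟩ := ha
    obtain ⟨m, hm⟩ := hb
    have hn' : F^[n] x0 = a := hn
    have hm' : F^[m] x0 = b := hm
    rw [← hn', ← hm', g_enum n, g_enum m] at hab
    rw [← hn', ← hm', hab]
  · intro n _
    exact ⟨F^[n] x0, iterate_mem_orb F x0 n, g_enum n⟩

lemma conj_succ {F : ℕ → ℕ} {x0 : ℕ} (hinf : (Orb F x0).Infinite)
    (hcof : (Orb F x0)ᶜ.Finite) :
    ((fun y => sInf {n | F^[n] x0 = y}) ∘ F) =ᶠ[Filter.cofinite]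
      ((· + 1) ∘ (fun y => sInf {n | F^[n] x0 = y})) := by
  set g : ℕ → ℕ := fun y => sInf {n | F^[n] x0 = y} with hg
  have g_enum : ∀ n, g (F^[n] x0) = n := fun n => enum_spec hinf n
  have hgood : ∀ y ∈ Orb F x0, (g ∘ F) y = g y + 1 := by
    rintro y ⟨n, hn⟩
    have hn' : F^[n] x0 = y := hn
    rw [← hn']
    show g (F (F^[n] x0)) = g (F^[n] x0) + 1
    rw [← Function.iterate_succ_apply' F n x0, g_enum, g_enum]
  refine Filter.mem_cofinite.mpr (hcof.subset ?_)
  intro y hy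
  intro hyO
  exact hy (hgood y hyO)

lemma conj_pred {f : ℕ → ℕ} {A B : Set ℕ} (hB : B.Finite) (hbij : Set.BijOn f Aᶜ Bᶜ)
    {x0 : ℕ} (hinf : (Orb (Function.invFunOn f Aᶜ) x0).Infinite)
    (hcof : (Orb (Function.invFunOn f Aᶜ) x0)ᶜ.Finite) :
    ((fun y => sInf {n | (Function.invFunOn f Aᶜ)^[n] x0 = y}) ∘ f) =ᶠ[Filter.cofinite]
      ((· - 1) ∘ (fun y => sInf {n | (Function.invFunOn f Aᶜ)^[n] x0 = y})) := by
  set G := Function.invFunOn f Aᶜ with hG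
  set g : ℕ → ℕ := fun y => sInf {n | G^[n] x0 = y} with hg
  have g_enum : ∀ n, g (G^[n] x0) = n := fun n => enum_spec hinf n
  have hBadfin : ((Orb G x0)ᶜ ∪ ({x0} ∪ (fun n => G^[n + 1] x0) ''
      ((fun n => G^[n] x0) ⁻¹' B))).Finite := by
    refine hcof.union ((Set.finite_singleton x0).union (Set.Finite.image _ ?_))
    exact Set.Finite.preimage ((orb_inj hinf).injOn) hB
  refine Filter.mem_cofinite.mpr (hBadfin.subset ?_)
  intro y hy
  by_contra hyBad
  apply hy
  by_cases hyO : y ∈ Orb G x0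
  swap
  · exact absurd (Set.mem_union_left _ (show y ∈ (Orb G x0)ᶜ from hyO)) hyBad
  obtain ⟨m, hm⟩ := hyO
  have hm' : G^[m] x0 = y := hm
  rcases Nat.eq_zero_or_pos m with rfl | hmpos
  · exact absurd (Set.mem_union_right _
      (Set.mem_union_left _ (Set.mem_singleton_iff.mpr hm'.symm))) hyBad
  obtain ⟨n, rfl⟩ : ∃ n, m = n + 1 := ⟨m - 1, by omega⟩
  have hnB : G^[n] x0 ∈ Bᶜ := by
    by_contra hnB
    rw [Set.notMem_compl_iff] at hnB
    exact hyBad (Set.mem_union_right _ (Set.mem_union_right _ ⟨n, hnB, hm'⟩))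
  have hfy : f y = G^[n] x0 := by
    rw [← hm', Function.iterate_succ_apply' G n x0]
    exact ((invFunOn_facts hbij).1 _ hnB).2
  show g (f y) = g y - 1
  rw [hfy, ← hm', g_enum, g_enum]
  omega

end AuxProof

/-- If `h` is a trivial self-homeomorphism of `ω*` that is chain transitive, then
`h` is isomorphic to the shift map `σ` or to its inverse `σ⁻¹`. -/
theorem stmt_11 (h : NStar ≃ₜ NStar) (htriv : IsTrivialHomeo h)
    (hct : ChainTransitive ⇑h) :
    Isomorphic h sigmaShift ∨ Isomorphic h sigmaShift.symm := by
  obtain ⟨f, hfperm, hmap⟩ := htriv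
  obtain ⟨A, B, hA, hB, hbij⟩ := hfperm
  have h_eq := h_eq_map h f hmap
  have hexp : Expanding f := expanding_of_chainTransitive h f hmap hct
  by_cases hcase : ∃ x0, (Orb f x0).Infinite
  · obtain ⟨x0, hinf⟩ := hcase
    have hcof := orb_cofinite hexp hinf
    exact Or.inl (isomorphic_of_conj h f h_eq (enum_modFinPerm hinf hcof)
      (conj_succ hinf hcof) sigmaShift sigma_coe)
  · push_neg at hcase
    have hOf : ∀ x, (Orb f x).Finite := fun x => hcase x
    by_cases hcase2 : ∃ x0, (Orb (Function.invFunOn f Aᶜ) x0).Infinite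
    · obtain ⟨x0, hinf⟩ := hcase2
      have hcof := orb_cofinite (expanding_inv hA hbij hexp) hinf
      exact Or.inr (isomorphic_of_conj h f h_eq (enum_modFinPerm hinf hcof)
        (conj_pred hB hbij hinf hcof) sigmaShift.symm sigma_symm_coe)
    · push_neg at hcase2
      exact (not_all_finite hA hB hbij hexp hOf
        (fun x => hcase2 x)).elim
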